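/- Suppose σ_{y·zx} > 0, σ_{z·x} > 0, σ_{w·x} > 0, σ_{w·zx} > 0, σ_{z·wx} > 0, df > 1, and fix q > 0. Writing f(t,d) := √(1 + (1 + t²)/(d − 1)) and ρ := ρ_{yw·zx}, the confidence interval for the Z-coefficient computed with W included equals the interval obtained from the regression without W recentred and rescaled as follows: [β̂ − q·SE(β̂), β̂ + q·SE(β̂)] = [b̂ + (−t_W ρ − q f(t_W, df)√(1 − ρ²))·SE(b̂), b̂ + (−t_W ρ + q f(t_W, df)√(1 − ρ²))·SE(b̂)]. -/

import Mathlib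

open scoped BigOperators

/-- Weighted inner product on ℝⁿ: `(A,B) := (∑ i, wᵢ Aᵢ Bᵢ) / (∑ i, wᵢ)`. -/
noncomputable def wip {n : ℕ} (w A B : Fin n → ℝ) : ℝ :=
  (∑ i, w i * A i * B i) / (∑ i, w i)

/-- `P` is the best linear predictor (orthogonal projection with respect to the
weighted inner product `wip w`) of `A` onto the span of the collection `C`. -/
def IsBlp {n : ℕ} (w : Fin n → ℝ) (C : Set (Fin n → ℝ)) (A P : Fin n → ℝ) : Prop :=
  P ∈ Submodule.span ℝ C ∧ ∀ v ∈ Submodule.span ℝ C, wip w (A - P) v = 0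


namespace Stmt5Aux
variable {n : ℕ} {w : Fin n → ℝ}

lemma wip_comm (A B : Fin n → ℝ) : wip w A B = wip w B A := by
  unfold wip; congr 1; exact Finset.sum_congr rfl (fun i _ => by ring)

lemma wip_sub_right (A B C : Fin n → ℝ) : wip w A (B - C) = wip w A B - wip w A C := by
  unfold wip
  rw [← sub_div]
  congr 1
  rw [← Finset.sum_sub_distrib]
  exact Finset.sum_congr rfl (fun i _ => by simp [Pi.sub_apply]; ring)

lemma wip_add_right (A B C : Fin n → ℝ) : wip w A (B + C) = wip w A B + wip w A C := by
  unfold wip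
  rw [← add_div]
  congr 1
  rw [← Finset.sum_add_distrib]
  exact Finset.sum_congr rfl (fun i _ => by simp [Pi.add_apply]; ring)

lemma wip_smul_right (c : ℝ) (A B : Fin n → ℝ) : wip w A (c • B) = c * wip w A B := by
  unfold wip
  rw [← mul_div_assoc]
  congr 1
  rw [Finset.mul_sum]
  exact Finset.sum_congr rfl (fun i _ => by simp [Pi.smul_apply]; ring)

lemma wip_sub_left (A B C : Fin n → ℝ) : wip w (A - B) C = wip w A C - wip w B C := by
  rw [wip_comm, wip_sub_right, wip_comm C A, wip_comm C B]

lemma wip_smul_left (c : ℝ) (A B : Fin n → ℝ) : wip w (c • A) B = c * wip w A B := by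
  rw [wip_comm, wip_smul_right, wip_comm B A]

lemma wip_zero_right (A : Fin n → ℝ) : wip w A 0 = 0 := by simp [wip]

lemma ortho_span {C : Set (Fin n → ℝ)} {r : Fin n → ℝ}
    (h : ∀ v ∈ C, wip w r v = 0) : ∀ v ∈ Submodule.span ℝ C, wip w r v = 0 := by
  intro v hv
  induction hv using Submodule.span_induction with
  | mem x hx => exact h x hx
  | zero => exact wip_zero_right r
  | add x y hx hy ihx ihy => rw [wip_add_right, ihx, ihy, add_zero]
  | smul c x hx ihx => rw [wip_smul_right, ihx, mul_zero]

lemma wip_self_nonneg (hw : ∀ i, 0 < w i) (v : Fin n → ℝ) : 0 ≤ wip w v v := by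
  unfold wip
  apply div_nonneg
  · exact Finset.sum_nonneg fun i _ => by nlinarith [(hw i).le, sq_nonneg (v i)]
  · exact Finset.sum_nonneg fun i _ => (hw i).le

lemma wip_self_zero (hw : ∀ i, 0 < w i) (hs : 0 < ∑ i, w i) {v : Fin n → ℝ}
    (h : wip w v v = 0) : v = 0 := by
  have hsum : ∑ i, w i * v i * v i = 0 := by
    unfold wip at h
    exact (div_eq_zero_iff.mp h).resolve_right (ne_of_gt hs)
  have hall := (Finset.sum_eq_zero_iff_of_nonneg
    (fun i _ => by nlinarith [(hw i).le, sq_nonneg (v i)])).mp hsum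
  funext i
  have hi := hall i (Finset.mem_univ i)
  rw [mul_assoc] at hi
  rcases mul_eq_zero.mp hi with h' | h'
  · exact absurd h' (ne_of_gt (hw i))
  · exact mul_self_eq_zero.mp h'

lemma blp_unique (hw : ∀ i, 0 < w i) (hs : 0 < ∑ i, w i)
    {C : Set (Fin n → ℝ)} {A P P' : Fin n → ℝ}
    (h : IsBlp w C A P) (h' : IsBlp w C A P') : P = P' := by
  have hm : P - P' ∈ Submodule.span ℝ C := Submodule.sub_mem _ h.1 h'.1
  have e1 := h.2 _ hm
  have e2 := h'.2 _ hm
  have hv : P - P' = (A - P') - (A - P) := by abel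
  have h0 : wip w (P - P') (P - P') = 0 := by
    nth_rewrite 1 [hv]
    rw [wip_sub_left, e1, e2, sub_zero]
  have := wip_self_zero hw hs h0
  exact sub_eq_zero.mp this

lemma wip_sub_smul_self (A B : Fin n → ℝ) (c : ℝ) :
    wip w (A - c • B) (A - c • B)
      = wip w A A - 2 * c * wip w A B + c ^ 2 * wip w B B := by
  simp only [wip_sub_left, wip_sub_right, wip_smul_left, wip_smul_right]
  rw [wip_comm B A]; ring

end Stmt5Aux

lemma stmt5_alg (sa sb sc se sg sy ss su df q bhat betahat : ℝ)
    (hsa : 0 < sa) (hsb : 0 < sb) (hsc : 0 < sc) (hse : 0 < se) (hsg : 0 < sg)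
    (hsy : 0 ≤ sy) (hdf : 1 < df)
    (hgc : sg * sc = sb * sc - ss ^ 2)
    (hec : se * sb = sb * sc - ss ^ 2)
    (hsye : sy * se = sa * se - su ^ 2)
    (hbetaval : betahat = bhat - su * ss / (se * sb)) :
    (betahat - q * (Real.sqrt sy / (Real.sqrt (df - 1) * Real.sqrt sg))
      = bhat + (-((ss / sc) / (Real.sqrt sg / (Real.sqrt df * Real.sqrt sc)))
            * (su / (Real.sqrt sa * Real.sqrt se))
          - q * Real.sqrt (1 + (1 + ((ss / sc) / (Real.sqrt sg / (Real.sqrt df * Real.sqrt sc))) ^ 2) / (df - 1))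
            * Real.sqrt (1 - (su / (Real.sqrt sa * Real.sqrt se)) ^ 2))
          * (Real.sqrt sa / (Real.sqrt df * Real.sqrt sb)))
    ∧ (betahat + q * (Real.sqrt sy / (Real.sqrt (df - 1) * Real.sqrt sg))
      = bhat + (-((ss / sc) / (Real.sqrt sg / (Real.sqrt df * Real.sqrt sc)))
            * (su / (Real.sqrt sa * Real.sqrt se))
          + q * Real.sqrt (1 + (1 + ((ss / sc) / (Real.sqrt sg / (Real.sqrt df * Real.sqrt sc))) ^ 2) / (df - 1))
            * Real.sqrt (1 - (su / (Real.sqrt sa * Real.sqrt se)) ^ 2))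
          * (Real.sqrt sa / (Real.sqrt df * Real.sqrt sb))) := by
  have hdf0 : 0 < df := by linarith
  have hdf1 : 0 < df - 1 := by linarith
  set QA := Real.sqrt sa with hQA
  set QB := Real.sqrt sb with hQB
  set QC := Real.sqrt sc with hQC
  set QE := Real.sqrt se with hQE
  set QG := Real.sqrt sg with hQG
  set QY := Real.sqrt sy with hQY
  set QD := Real.sqrt df with hQD
  set QD1 := Real.sqrt (df - 1) with hQD1
  have hQA0 : 0 < QA := Real.sqrt_pos.mpr hsa
  have hQB0 : 0 < QB := Real.sqrt_pos.mpr hsb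
  have hQC0 : 0 < QC := Real.sqrt_pos.mpr hsc
  have hQE0 : 0 < QE := Real.sqrt_pos.mpr hse
  have hQG0 : 0 < QG := Real.sqrt_pos.mpr hsg
  have hQY0 : 0 ≤ QY := Real.sqrt_nonneg _
  have hQD0 : 0 < QD := Real.sqrt_pos.mpr hdf0
  have hQD10 : 0 < QD1 := Real.sqrt_pos.mpr hdf1
  have hQA2 : QA ^ 2 = sa := Real.sq_sqrt hsa.le
  have hQB2 : QB ^ 2 = sb := Real.sq_sqrt hsb.le
  have hQC2 : QC ^ 2 = sc := Real.sq_sqrt hsc.le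
  have hQE2 : QE ^ 2 = se := Real.sq_sqrt hse.le
  have hQG2 : QG ^ 2 = sg := Real.sq_sqrt hsg.le
  have hQY2 : QY ^ 2 = sy := Real.sq_sqrt hsy
  have hQD2 : QD ^ 2 = df := Real.sq_sqrt hdf0.le
  have hQD12 : QD1 ^ 2 = df - 1 := Real.sq_sqrt hdf1.le
  have h1 : sc * sg = se * sb := by linear_combination hgc - hec
  have hmul : QC * QG = QE * QB := by
    rw [hQC, hQG, hQE, hQB, ← Real.sqrt_mul hsc.le, ← Real.sqrt_mul hse.le, h1]
  -- center identity
  have hcen : ((ss / sc) / (QG / (QD * QC))) * (su / (QA * QE)) * (QA / (QD * QB))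
      = su * ss / (se * sb) := by
    rw [← hQC2, ← hQE2, ← hQB2]
    field_simp
    linear_combination (-(ss * su)) * hmul
  -- width identity
  have hρ2 : 1 - (su / (QA * QE)) ^ 2 = sy / sa := by
    have hsu2 : su ^ 2 = sa * se - sy * se := by linarith
    rw [div_pow, mul_pow, hQA2, hQE2, hsu2]
    field_simp
    ring
  have hρ2nn : 0 ≤ 1 - (su / (QA * QE)) ^ 2 := by
    rw [hρ2]; exact div_nonneg hsy hsa.le
  have htW2 : ((ss / sc) / (QG / (QD * QC))) ^ 2 = df * ss ^ 2 / (sc * sg) := by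
    rw [div_pow, div_pow, div_pow, mul_pow, hQG2, hQC2, hQD2]
    field_simp
  have hfarg : 0 ≤ 1 + (1 + ((ss / sc) / (QG / (QD * QC))) ^ 2) / (df - 1) := by
    have : 0 ≤ (1 + ((ss / sc) / (QG / (QD * QC))) ^ 2) / (df - 1) :=
      div_nonneg (by positivity) hdf1.le
    linarith
  have hwidth : QY / (QD1 * QG)
      = Real.sqrt (1 + (1 + ((ss / sc) / (QG / (QD * QC))) ^ 2) / (df - 1))
        * Real.sqrt (1 - (su / (QA * QE)) ^ 2) * (QA / (QD * QB)) := by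
    have h0' : 0 ≤ QY / (QD1 * QG) := by positivity
    have h0 : 0 ≤ Real.sqrt (1 + (1 + ((ss / sc) / (QG / (QD * QC))) ^ 2) / (df - 1))
        * Real.sqrt (1 - (su / (QA * QE)) ^ 2) * (QA / (QD * QB)) := by positivity
    have hsq : (QY / (QD1 * QG)) ^ 2
        = (Real.sqrt (1 + (1 + ((ss / sc) / (QG / (QD * QC))) ^ 2) / (df - 1))
            * Real.sqrt (1 - (su / (QA * QE)) ^ 2) * (QA / (QD * QB))) ^ 2 := by
      rw [mul_pow, mul_pow, Real.sq_sqrt hρ2nn, Real.sq_sqrt hfarg, hρ2, htW2]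
      rw [div_pow QY, div_pow QA, mul_pow, mul_pow, hQY2, hQG2, hQD12, hQA2, hQD2, hQB2]
      have hss2 : ss ^ 2 = sb * sc - sg * sc := by linarith
      rw [hss2]
      field_simp
      ring
    calc QY / (QD1 * QG) = Real.sqrt ((QY / (QD1 * QG)) ^ 2) := (Real.sqrt_sq h0').symm
      _ = _ := by rw [hsq]; exact Real.sqrt_sq h0
  constructor
  · rw [hbetaval, ← hcen, hwidth]; ring
  · rw [hbetaval, ← hcen, hwidth]; ring

open Stmt5Aux

/-- under the positivity conditions, `df > 1` and `q > 0`, the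
confidence interval computed with `W` included equals the recentred/rescaled interval
`[b̂ + (−t_Wρ − q f(t_W,df)√(1−ρ²))·SE(b̂), b̂ + (−t_Wρ + q f(t_W,df)√(1−ρ²))·SE(b̂)]`,
where `f(t,d) = √(1 + (1+t²)/(d−1))` and `ρ = ρ_{yw·zx}`. -/
theorem stmt5 {n : ℕ} (w : Fin n → ℝ) (hw : ∀ i, 0 < w i)
    (X : Set (Fin n → ℝ)) (hXfin : X.Finite)
    (h1 : (fun _ => (1 : ℝ)) ∈ Submodule.span ℝ X)
    (Y Z W : Fin n → ℝ)
    (Pzx Pwx Pyzx Pwzx Pzwx Pyzxw : Fin n → ℝ)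
    (hPzx : IsBlp w X Z Pzx)
    (hPwx : IsBlp w X W Pwx)
    (hPyzx : IsBlp w (insert Z X) Y Pyzx)
    (hPwzx : IsBlp w (insert Z X) W Pwzx)
    (hPzwx : IsBlp w (insert W X) Z Pzwx)
    (hPyzxw : IsBlp w (insert Z (insert W X)) Y Pyzxw)
    (bhat betahat deltahat : ℝ)
    (hb : Pyzx - bhat • Z ∈ Submodule.span ℝ X)
    (hbeta : Pyzxw - betahat • Z - deltahat • W ∈ Submodule.span ℝ X)
    (hσyzx : 0 < wip w (Y - Pyzx) (Y - Pyzx))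
    (hσzx : 0 < wip w (Z - Pzx) (Z - Pzx))
    (hσwx : 0 < wip w (W - Pwx) (W - Pwx))
    (hσwzx : 0 < wip w (W - Pwzx) (W - Pwzx))
    (hσzwx : 0 < wip w (Z - Pzwx) (Z - Pzwx))
    (hdf : 1 < (n : ℝ) - (Module.finrank ℝ (Submodule.span ℝ X) : ℝ) - 1)
    (q : ℝ) (hq : 0 < q) :
    let df : ℝ := (n : ℝ) - (Module.finrank ℝ (Submodule.span ℝ X) : ℝ) - 1
    let σyzx := Real.sqrt (wip w (Y - Pyzx) (Y - Pyzx))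
    let σzx := Real.sqrt (wip w (Z - Pzx) (Z - Pzx))
    let σwx := Real.sqrt (wip w (W - Pwx) (W - Pwx))
    let σwzx := Real.sqrt (wip w (W - Pwzx) (W - Pwzx))
    let σzwx := Real.sqrt (wip w (Z - Pzwx) (Z - Pzwx))
    let σyzxw := Real.sqrt (wip w (Y - Pyzxw) (Y - Pyzxw))
    let SEb := σyzx / (Real.sqrt df * σzx)
    let SEbeta := σyzxw / (Real.sqrt (df - 1) * σzwx)
    let tW := (wip w (W - Pwx) (Z - Pzx) / wip w (W - Pwx) (W - Pwx)) /
      (σzwx / (Real.sqrt df * σwx))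
    let ρ := wip w (Y - Pyzx) (W - Pwzx) / (σyzx * σwzx)
    let f := Real.sqrt (1 + (1 + tW ^ 2) / (df - 1))
    Set.Icc (betahat - q * SEbeta) (betahat + q * SEbeta)
      = Set.Icc (bhat + (-tW * ρ - q * f * Real.sqrt (1 - ρ ^ 2)) * SEb)
          (bhat + (-tW * ρ + q * f * Real.sqrt (1 - ρ ^ 2)) * SEb) := by
  classical
  intro df σyzx σzx σwx σwzx σzwx σyzxw SEb SEbeta tW ρ f
  have hs : 0 < ∑ i, w i := by
    rcases isEmpty_or_nonempty (Fin n) with hE | hE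
    · exfalso
      have h0 : wip w (Z - Pzx) (Z - Pzx) = 0 := by
        simp [wip, Finset.univ_eq_empty]
      rw [h0] at hσzx; exact lt_irrefl 0 hσzx
    · exact Finset.sum_pos (fun i _ => hw i) Finset.univ_nonempty

  have hsbne : wip w (Z - Pzx) (Z - Pzx) ≠ 0 := ne_of_gt hσzx
  have hscne : wip w (W - Pwx) (W - Pwx) ≠ 0 := ne_of_gt hσwx
  have hsene : wip w (W - Pwzx) (W - Pwzx) ≠ 0 := ne_of_gt hσwzx
  have hle1 : Submodule.span ℝ X ≤ Submodule.span ℝ (insert Z X) :=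
    Submodule.span_mono (Set.subset_insert Z X)
  have hle2 : Submodule.span ℝ X ≤ Submodule.span ℝ (insert W X) :=
    Submodule.span_mono (Set.subset_insert W X)
  have hle3 : Submodule.span ℝ (insert Z X) ≤ Submodule.span ℝ (insert Z (insert W X)) :=
    Submodule.span_mono (Set.insert_subset_insert (Set.subset_insert W X))
  have hZm : Z ∈ Submodule.span ℝ (insert Z X) := Submodule.subset_span (Set.mem_insert Z X)
  have hWm : W ∈ Submodule.span ℝ (insert W X) := Submodule.subset_span (Set.mem_insert W X)
  have hWb : W ∈ Submodule.span ℝ (insert Z (insert W X)) :=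
    Submodule.subset_span (Set.mem_insert_of_mem Z (Set.mem_insert W X))
  -- basic inner products
  have hrzZ : wip w (Z - Pzx) Z = wip w (Z - Pzx) (Z - Pzx) := by
    rw [wip_sub_right, hPzx.2 Pzx hPzx.1, sub_zero]
  have hrwW : wip w (W - Pwx) W = wip w (W - Pwx) (W - Pwx) := by
    rw [wip_sub_right, hPwx.2 Pwx hPwx.1, sub_zero]
  have hrwZ : wip w (W - Pwx) Z = wip w (W - Pwx) (Z - Pzx) := by
    rw [wip_sub_right, hPwx.2 Pzx hPzx.1, sub_zero]
  have hrzW : wip w (Z - Pzx) W = wip w (W - Pwx) (Z - Pzx) := by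
    rw [wip_comm (W - Pwx) (Z - Pzx), wip_sub_right, hPzx.2 Pwx hPwx.1, sub_zero]
  -- decomposition 1 : Pwzx
  have hPwzx_eq : Pwzx = Pwx
      + (wip w (W - Pwx) (Z - Pzx) / wip w (Z - Pzx) (Z - Pzx)) • (Z - Pzx) := by
    refine blp_unique hw hs hPwzx ⟨?_, ?_⟩
    · exact Submodule.add_mem _ (hle1 hPwx.1)
        (Submodule.smul_mem _ _ (Submodule.sub_mem _ hZm (hle1 hPzx.1)))
    · apply ortho_span
      intro v hv
      rw [sub_add_eq_sub_sub, wip_sub_left, wip_smul_left]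
      rcases Set.mem_insert_iff.mp hv with rfl | hv
      · rw [hrwZ, hrzZ]
        field_simp
        ring
      · rw [hPwx.2 v (Submodule.subset_span hv), hPzx.2 v (Submodule.subset_span hv)]; ring
  have hrwz_eq : W - Pwzx
      = (W - Pwx) - (wip w (W - Pwx) (Z - Pzx) / wip w (Z - Pzx) (Z - Pzx)) • (Z - Pzx) := by
    rw [hPwzx_eq]; exact sub_add_eq_sub_sub _ _ _
  -- decomposition 2 : Pzwx
  have hPzwx_eq : Pzwx = Pzx
      + (wip w (W - Pwx) (Z - Pzx) / wip w (W - Pwx) (W - Pwx)) • (W - Pwx) := by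
    refine blp_unique hw hs hPzwx ⟨?_, ?_⟩
    · exact Submodule.add_mem _ (hle2 hPzx.1)
        (Submodule.smul_mem _ _ (Submodule.sub_mem _ hWm (hle2 hPwx.1)))
    · apply ortho_span
      intro v hv
      rw [sub_add_eq_sub_sub, wip_sub_left, wip_smul_left]
      rcases Set.mem_insert_iff.mp hv with rfl | hv
      · rw [hrzW, hrwW]
        field_simp
        ring
      · rw [hPzx.2 v (Submodule.subset_span hv), hPwx.2 v (Submodule.subset_span hv)]; ring
  have hrzw_eq : Z - Pzwx
      = (Z - Pzx) - (wip w (W - Pwx) (Z - Pzx) / wip w (W - Pwx) (W - Pwx)) • (W - Pwx) := by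
    rw [hPzwx_eq]; exact sub_add_eq_sub_sub _ _ _
  -- decomposition 3 : Pyzxw
  have hryzZ : wip w (Y - Pyzx) Z = 0 := hPyzx.2 Z hZm
  have hrwzZ : wip w (W - Pwzx) Z = 0 := hPwzx.2 Z hZm
  have hryzW : wip w (Y - Pyzx) W = wip w (Y - Pyzx) (W - Pwzx) := by
    rw [wip_sub_right, hPyzx.2 Pwzx hPwzx.1, sub_zero]
  have hrwzW : wip w (W - Pwzx) W = wip w (W - Pwzx) (W - Pwzx) := by
    rw [wip_sub_right, hPwzx.2 Pwzx hPwzx.1, sub_zero]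
  have hPyzxw_eq : Pyzxw = Pyzx
      + (wip w (Y - Pyzx) (W - Pwzx) / wip w (W - Pwzx) (W - Pwzx)) • (W - Pwzx) := by
    refine blp_unique hw hs hPyzxw ⟨?_, ?_⟩
    · exact Submodule.add_mem _ (hle3 hPyzx.1)
        (Submodule.smul_mem _ _ (Submodule.sub_mem _ hWb (hle3 hPwzx.1)))
    · apply ortho_span
      intro v hv
      rw [sub_add_eq_sub_sub, wip_sub_left, wip_smul_left]
      rcases Set.mem_insert_iff.mp hv with rfl | hv
      · rw [hryzZ, hrwzZ]; ring
      rcases Set.mem_insert_iff.mp hv with rfl | hv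
      · rw [hryzW, hrwzW]
        field_simp
        ring
      · rw [hPyzx.2 v (Submodule.subset_span (Set.mem_insert_of_mem Z hv)),
          hPwzx.2 v (Submodule.subset_span (Set.mem_insert_of_mem Z hv))]; ring
  have hry_eq : Y - Pyzxw
      = (Y - Pyzx) - (wip w (Y - Pyzx) (W - Pwzx) / wip w (W - Pwzx) (W - Pwzx)) • (W - Pwzx) := by
    rw [hPyzxw_eq]; exact sub_add_eq_sub_sub _ _ _
  -- scalar identities
  have hgc : wip w (Z - Pzwx) (Z - Pzwx) * wip w (W - Pwx) (W - Pwx)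
      = wip w (Z - Pzx) (Z - Pzx) * wip w (W - Pwx) (W - Pwx)
        - wip w (W - Pwx) (Z - Pzx) ^ 2 := by
    rw [hrzw_eq, wip_sub_smul_self, wip_comm (Z - Pzx) (W - Pwx)]
    field_simp; ring
  have hec : wip w (W - Pwzx) (W - Pwzx) * wip w (Z - Pzx) (Z - Pzx)
      = wip w (Z - Pzx) (Z - Pzx) * wip w (W - Pwx) (W - Pwx)
        - wip w (W - Pwx) (Z - Pzx) ^ 2 := by
    rw [hrwz_eq, wip_sub_smul_self]
    field_simp; ring
  have hsye : wip w (Y - Pyzxw) (Y - Pyzxw) * wip w (W - Pwzx) (W - Pwzx)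
      = wip w (Y - Pyzx) (Y - Pyzx) * wip w (W - Pwzx) (W - Pwzx)
        - wip w (Y - Pyzx) (W - Pwzx) ^ 2 := by
    rw [hry_eq, wip_sub_smul_self]
    field_simp; ring
  -- betahat formula
  have hrzwW : wip w (Z - Pzwx) W = 0 := hPzwx.2 W hWm
  have hrzwPwx : wip w (Z - Pzwx) Pwx = 0 := hPzwx.2 Pwx (hle2 hPwx.1)
  have hrzwZ : wip w (Z - Pzwx) Z = wip w (Z - Pzwx) (Z - Pzwx) := by
    rw [wip_sub_right, hPzwx.2 Pzwx hPzwx.1, sub_zero]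
  have hrzwPzx : wip w (Z - Pzwx) Pzx = 0 := hPzwx.2 Pzx (hle2 hPzx.1)
  have h5 : wip w (Z - Pzwx) (Pyzx - bhat • Z) = 0 := hPzwx.2 _ (hle2 hb)
  have hrzwPyzx : wip w (Z - Pzwx) Pyzx = bhat * wip w (Z - Pzwx) (Z - Pzwx) := by
    rw [wip_sub_right, wip_smul_right, hrzwZ] at h5; linarith
  have hrzwrwz : wip w (Z - Pzwx) (W - Pwzx)
      = -(wip w (W - Pwx) (Z - Pzx) / wip w (Z - Pzx) (Z - Pzx))
          * wip w (Z - Pzwx) (Z - Pzwx) := by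
    rw [hrwz_eq, wip_sub_right, wip_smul_right]
    have h6 : wip w (Z - Pzwx) (W - Pwx) = 0 := by
      rw [wip_sub_right, hrzwW, hrzwPwx, sub_zero]
    have h7 : wip w (Z - Pzwx) (Z - Pzx) = wip w (Z - Pzwx) (Z - Pzwx) := by
      rw [wip_sub_right, hrzwPzx, sub_zero, hrzwZ]
    rw [h6, h7]; ring
  have hEq : wip w (Z - Pzwx) (Pyzxw - betahat • Z - deltahat • W) = 0 :=
    hPzwx.2 _ (hle2 hbeta)
  have hrzwPyzxw : wip w (Z - Pzwx) Pyzxw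
      = (bhat - (wip w (Y - Pyzx) (W - Pwzx) / wip w (W - Pwzx) (W - Pwzx))
          * (wip w (W - Pwx) (Z - Pzx) / wip w (Z - Pzx) (Z - Pzx)))
        * wip w (Z - Pzwx) (Z - Pzwx) := by
    rw [hPyzxw_eq, wip_add_right, wip_smul_right, hrzwPyzx, hrzwrwz]; ring
  have hbetaval : betahat
      = bhat - (wip w (Y - Pyzx) (W - Pwzx) * wip w (W - Pwx) (Z - Pzx))
          / (wip w (W - Pwzx) (W - Pwzx) * wip w (Z - Pzx) (Z - Pzx)) := by
    rw [wip_sub_right, wip_sub_right, wip_smul_right, wip_smul_right,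
      hrzwPyzxw, hrzwZ, hrzwW] at hEq
    have h8 : (betahat
        - (bhat - (wip w (Y - Pyzx) (W - Pwzx) / wip w (W - Pwzx) (W - Pwzx))
            * (wip w (W - Pwx) (Z - Pzx) / wip w (Z - Pzx) (Z - Pzx))))
        * wip w (Z - Pzwx) (Z - Pzwx) = 0 := by linear_combination -hEq
    rcases mul_eq_zero.mp h8 with h9 | h9
    · have h10 : betahat = bhat
          - (wip w (Y - Pyzx) (W - Pwzx) / wip w (W - Pwzx) (W - Pwzx))
            * (wip w (W - Pwx) (Z - Pzx) / wip w (Z - Pzx) (Z - Pzx)) := by linarith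
      rw [h10, div_mul_div_comm]
    · exact absurd h9 (ne_of_gt hσzwx)
  have hsy0 : 0 ≤ wip w (Y - Pyzxw) (Y - Pyzxw) := Stmt5Aux.wip_self_nonneg hw _
  have halg := stmt5_alg (wip w (Y - Pyzx) (Y - Pyzx)) (wip w (Z - Pzx) (Z - Pzx))
      (wip w (W - Pwx) (W - Pwx)) (wip w (W - Pwzx) (W - Pwzx)) (wip w (Z - Pzwx) (Z - Pzwx))
      (wip w (Y - Pyzxw) (Y - Pyzxw)) (wip w (W - Pwx) (Z - Pzx)) (wip w (Y - Pyzx) (W - Pwzx))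
      df q bhat betahat hσyzx hσzx hσwx hσwzx hσzwx hsy0 hdf hgc hec hsye hbetaval
  have hL : betahat - q * SEbeta
      = bhat + (-tW * ρ - q * f * Real.sqrt (1 - ρ ^ 2)) * SEb := halg.1
  have hR : betahat + q * SEbeta
      = bhat + (-tW * ρ + q * f * Real.sqrt (1 - ρ ^ 2)) * SEb := halg.2
  rw [hL, hR]
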